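/- Let t ≥ 0, h ≥ 0 and let i be an integer with 0 ≤ i ≤ h. For n ≥ 0 let a_n denote the number of Deutsch paths of length n from height 0 to height i all of whose heights h_k satisfy -t ≤ h_k ≤ h. Then in the formal power series ring ℤ[[v]], the series S = Σ_{n≥0} a_n · vⁿ · ((1+v+v²)⁻¹)ⁿ satisfies S · (1-v) · (1+v)^{i+2} · (1-v^{h+t+3}) = v^{i} · (1-v^{t+2}) · (1-v^{h-i+2}) · (1+v+v²). -/

import Mathlib

open PowerSeries Finset

/-- The power series `1 + v + v²` over `ℤ`. -/
noncomputable def q : PowerSeries ℤ := 1 + X + X ^ 2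

/-- `v · (1+v+v²)⁻¹` as a formal power series over `ℤ`. -/
noncomputable def w : PowerSeries ℤ := X * PowerSeries.invOfUnit q 1

/-- `p` is a Deutsch path of length `n`: each step is either an up-step `+1`
or a down-step of arbitrary (negative) size. -/
def IsDeutschPath (n : ℕ) (p : Fin (n + 1) → ℤ) : Prop :=
  ∀ i : Fin n, p i.succ - p i.castSucc = 1 ∨ p i.succ - p i.castSucc ≤ -1

/-- Number of Deutsch paths of length `n` from height `a` to height `b`
all of whose heights satisfy the predicate `P`. -/
noncomputable def pathCount (n : ℕ) (a b : ℤ) (P : ℤ → Prop) : ℕ :=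
  Nat.card {p : Fin (n + 1) → ℤ //
    p 0 = a ∧ p (Fin.last n) = b ∧ (∀ i, P (p i)) ∧ IsDeutschPath n p}

/-- The power series `Σ_{n≥0} a_n · vⁿ · ((1+v+v²)⁻¹)ⁿ`.  Since the `n`-th
summand has order `≥ n`, its coefficient of `v^N` is the (finite) sum of the
corresponding coefficients of the summands with `n ≤ N`. -/
noncomputable def series (a : ℕ → ℕ) : PowerSeries ℤ :=
  PowerSeries.mk fun N => ∑ n ∈ range (N + 1), (a n : ℤ) * coeff N (w ^ n)

variable (t h : ℕ)

/-- abbreviation for the bounded predicate -/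
def Pb (t h : ℕ) : ℤ → Prop := fun x => -(t : ℤ) ≤ x ∧ x ≤ (h : ℤ)

/-- The set of paths counted by `pathCount n 0 j (Pb t h)`. -/
def PS (n : ℕ) (j : ℤ) : Type := {p : Fin (n + 1) → ℤ //
    p 0 = 0 ∧ p (Fin.last n) = j ∧ (∀ i, Pb t h (p i)) ∧ IsDeutschPath n p}

lemma pathCount_eq (n : ℕ) (j : ℤ) : pathCount n 0 j (Pb t h) = Nat.card (PS t h n j) := rfl

instance PS_finite (n : ℕ) (j : ℤ) : Finite (PS t h n j) := by
  have : Finite (Fin (n + 1) → ↥(Set.Icc (-(t:ℤ)) (h:ℤ))) := by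
    have : Finite ↥(Set.Icc (-(t:ℤ)) (h:ℤ)) := (Set.finite_Icc _ _).to_subtype
    exact Pi.finite
  refine Finite.of_injective (fun p : PS t h n j =>
    (fun i => ⟨p.1 i, (p.2.2.2.1 i).1, (p.2.2.2.1 i).2⟩ :
      Fin (n + 1) → ↥(Set.Icc (-(t:ℤ)) (h:ℤ)))) ?_
  intro p p' hp
  apply Subtype.ext; funext i
  exact congrArg Subtype.val (congrFun hp i)

lemma pathCount_zero (j : ℤ) : pathCount 0 0 j (Pb t h) = if j = 0 then 1 else 0 := by
  rw [pathCount_eq]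
  split_ifs with hj
  · subst hj
    rw [Nat.card_eq_one_iff_unique]
    constructor
    · constructor
      rintro ⟨p, hp0, -⟩ ⟨p', hp'0, -⟩
      apply Subtype.ext; funext i
      have hi : i = 0 := Fin.fin_one_eq_zero i
      show p i = p' i
      rw [hi, hp0, hp'0]
    · exact ⟨⟨fun _ => 0, rfl, rfl, fun i => ⟨by simp, by simp⟩, fun i => i.elim0⟩⟩
  · rw [Nat.card_eq_zero]
    left
    constructor
    rintro ⟨p, hp0, hpl, -⟩
    apply hj
    rw [← hpl, show (Fin.last 0) = 0 from Fin.fin_one_eq_zero _, hp0]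

lemma nat_card_sigma {ι : Type*} [Fintype ι] (g : ι → Type*) [∀ i, Finite (g i)] :
    Nat.card (Σ i, g i) = ∑ i, Nat.card (g i) := by
  letI : ∀ i, Fintype (g i) := fun i => Fintype.ofFinite _
  rw [Nat.card_eq_fintype_card, Fintype.card_sigma]
  simp [Nat.card_eq_fintype_card]

/-- truncation/extension equivalence between paths of length `n+1` ending at `j`
whose second-to-last height is `k`, and paths of length `n` ending at `k`. -/
lemma snoc_spec (n : ℕ) (j k : ℤ) (hjt : -(t:ℤ) ≤ j) (hjh : j ≤ (h:ℤ))
    (hk : k = j - 1 ∨ j < k) (y : PS t h n k) :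
    (Fin.snoc y.1 j : Fin (n + 2) → ℤ) 0 = 0 ∧
    (Fin.snoc y.1 j : Fin (n + 2) → ℤ) (Fin.last (n + 1)) = j ∧
    (∀ i, Pb t h ((Fin.snoc y.1 j : Fin (n + 2) → ℤ) i)) ∧
    IsDeutschPath (n + 1) (Fin.snoc y.1 j) := by
  obtain ⟨p, h0, hl, hP, hD⟩ := y
  refine ⟨?_, ?_, ?_, ?_⟩
  · have e0 : (0 : Fin (n + 2)) = Fin.castSucc (0 : Fin (n + 1)) := rfl
    rw [e0, @Fin.snoc_castSucc (n + 1) (fun _ => ℤ) j p 0]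
    exact h0
  · rw [Fin.snoc_last]
  · intro i
    refine Fin.lastCases ?_ ?_ i
    · rw [Fin.snoc_last]; exact ⟨hjt, hjh⟩
    · intro i'
      rw [@Fin.snoc_castSucc (n + 1) (fun _ => ℤ) j p i']
      exact hP i'
  · intro i
    refine Fin.lastCases ?_ ?_ i
    · rw [Fin.succ_last, Fin.snoc_last,
        @Fin.snoc_castSucc (n + 1) (fun _ => ℤ) j p (Fin.last n), hl]
      omega
    · intro i'
      rw [Fin.succ_castSucc, @Fin.snoc_castSucc (n + 1) (fun _ => ℤ) j p i'.succ,
        @Fin.snoc_castSucc (n + 1) (fun _ => ℤ) j p i'.castSucc]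
      exact hD i'

/-- truncation/extension equivalence between paths of length `n+1` ending at `j`
whose second-to-last height is `k`, and paths of length `n` ending at `k`. -/
noncomputable def fiberEquiv (n : ℕ) (j k : ℤ) (hjt : -(t:ℤ) ≤ j) (hjh : j ≤ (h:ℤ))
    (hk : k = j - 1 ∨ j < k) :
    {x : PS t h (n + 1) j // x.1 (Fin.castSucc (Fin.last n)) = k} ≃ PS t h n k where
  toFun x := ⟨Fin.init x.1.1, by
      show x.1.1 (Fin.castSucc 0) = 0
      rw [Fin.castSucc_zero]; exact x.1.2.1,
    by show x.1.1 (Fin.castSucc (Fin.last n)) = k; exact x.2,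
    fun i => x.1.2.2.2.1 (Fin.castSucc i),
    by
      intro i
      have hD := x.1.2.2.2.2 (Fin.castSucc i)
      rw [Fin.succ_castSucc] at hD
      simpa [Fin.init] using hD⟩
  invFun y := ⟨⟨Fin.snoc y.1 j, snoc_spec t h n j k hjt hjh hk y⟩, by
      show (Fin.snoc y.1 j : Fin (n + 2) → ℤ) (Fin.castSucc (Fin.last n)) = k
      rw [@Fin.snoc_castSucc (n + 1) (fun _ => ℤ) j y.1 (Fin.last n)]
      exact y.2.2.1⟩
  left_inv x := by
    obtain ⟨⟨p, h0, hl, hP, hD⟩, hk'⟩ := x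
    apply Subtype.ext; apply Subtype.ext
    show Fin.snoc (Fin.init p) j = p
    rw [← hl, Fin.snoc_init_self]
  right_inv y := by
    apply Subtype.ext
    exact @Fin.init_snoc (n + 1) (fun _ => ℤ) j y.1

lemma pathCount_succ (n : ℕ) (j : ℤ) (hjt : -(t:ℤ) ≤ j) (hjh : j ≤ (h:ℤ)) :
    pathCount (n + 1) 0 j (Pb t h) =
      (if -(t:ℤ) ≤ j - 1 then pathCount n 0 (j - 1) (Pb t h) else 0) +
        ∑ k ∈ Finset.Icc (j + 1) (h : ℤ), pathCount n 0 k (Pb t h) := by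
  classical
  set F : Finset ℤ := (Finset.Icc (-(t:ℤ)) (h:ℤ)).filter (fun k => k = j - 1 ∨ j < k) with hF
  have memF : ∀ k, k ∈ F ↔ (-(t:ℤ) ≤ k ∧ k ≤ h) ∧ (k = j - 1 ∨ j < k) := by
    intro k; simp [hF, Finset.mem_filter, Finset.mem_Icc]
  -- the classifying map
  have hmem : ∀ x : PS t h (n + 1) j, x.1 (Fin.castSucc (Fin.last n)) ∈ F := by
    intro x
    rw [memF]
    refine ⟨⟨(x.2.2.2.1 _).1, (x.2.2.2.1 _).2⟩, ?_⟩
    have hD := x.2.2.2.2 (Fin.last n)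
    rw [Fin.succ_last, x.2.2.1] at hD
    omega
  set f : PS t h (n + 1) j → ↥F := fun x => ⟨x.1 (Fin.castSucc (Fin.last n)), hmem x⟩ with hf
  have h1 : pathCount (n + 1) 0 j (Pb t h) = ∑ k ∈ F, pathCount n 0 k (Pb t h) := by
    rw [pathCount_eq, ← Nat.card_congr (Equiv.sigmaFiberEquiv f), nat_card_sigma,
      ← Finset.sum_coe_sort F (fun k => pathCount n 0 k (Pb t h))]
    refine Finset.sum_congr rfl fun k _ => ?_
    have hkF := (memF k.1).mp k.2
    have e2 : {x : PS t h (n + 1) j // f x = k} ≃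
        {x : PS t h (n + 1) j // x.1 (Fin.castSucc (Fin.last n)) = k.1} :=
      Equiv.subtypeEquivRight fun x => by rw [hf, Subtype.ext_iff]
    rw [Nat.card_congr (e2.trans (fiberEquiv t h n j k.1 hjt hjh hkF.2)), pathCount_eq]
  rw [h1]
  have hsplit : F = (if -(t:ℤ) ≤ j - 1 then ({j - 1} : Finset ℤ) else ∅) ∪
      Finset.Icc (j + 1) (h : ℤ) := by
    ext k
    rw [memF]
    split_ifs with hg <;> simp [Finset.mem_Icc] <;> omega
  rw [hsplit, Finset.sum_union]
  · congr 1
    split_ifs <;> simp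
  · split_ifs <;> simp [Finset.disjoint_left] <;> omega

lemma constantCoeff_q : constantCoeff q = 1 := by simp [q]

lemma q_mul_w : q * w = X := by
  have h : q * PowerSeries.invOfUnit q 1 = 1 :=
    PowerSeries.mul_invOfUnit q 1 (by simp [constantCoeff_q])
  rw [w, mul_comm X, ← mul_assoc, h, one_mul]

lemma coeff_w_pow_eq_zero {N n : ℕ} (hNn : N < n) : coeff N (w ^ n) = 0 := by
  have : (X : PowerSeries ℤ) ^ n ∣ w ^ n := pow_dvd_pow_of_dvd ⟨_, rfl⟩ n
  exact (PowerSeries.X_pow_dvd_iff.mp this) N hNn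

lemma coeff_series (a : ℕ → ℕ) (N : ℕ) :
    coeff N (series a) = ∑ n ∈ range (N + 1), (a n : ℤ) * coeff N (w ^ n) := by
  simp [series]

lemma series_add (a b : ℕ → ℕ) :
    series (fun n => a n + b n) = series a + series b := by
  ext N
  simp [coeff_series, Finset.sum_add_distrib, add_mul]

lemma series_sum {ι : Type*} (s : Finset ι) (f : ι → ℕ → ℕ) :
    series (fun n => ∑ k ∈ s, f k n) = ∑ k ∈ s, series (f k) := by
  classical
  induction s using Finset.induction with
  | empty => ext N; simp [coeff_series]
  | insert _ _ hx ih =>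
      rw [Finset.sum_insert hx, ← ih, ← series_add]
      simp [Finset.sum_insert hx]

lemma series_rec (a : ℕ → ℕ) :
    series a = C ((a 0 : ℤ)) + w * series (fun n => a (n + 1)) := by
  ext N
  rw [map_add, coeff_series, PowerSeries.coeff_mul,
    Finset.Nat.sum_antidiagonal_eq_sum_range_succ_mk]
  have key : ∀ m ∈ range (N + 1), coeff m w *
      coeff (N - m) (series fun n => a (n + 1)) =
      ∑ n ∈ range (N + 1), (a (n + 1) : ℤ) * (coeff m w * coeff (N - m) (w ^ n)) := by
    intro m hm
    simp only [Finset.mem_range] at hm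
    rw [coeff_series, Finset.mul_sum]
    calc ∑ n ∈ range (N - m + 1), coeff m w * ((a (n + 1) : ℤ) * coeff (N - m) (w ^ n))
        = ∑ n ∈ range (N + 1), coeff m w * ((a (n + 1) : ℤ) * coeff (N - m) (w ^ n)) := by
          refine Finset.sum_subset (Finset.range_subset_range.mpr (by omega)) ?_
          intro n hn hn2
          simp only [Finset.mem_range] at hn hn2
          rw [coeff_w_pow_eq_zero (by omega)]
          ring
      _ = _ := Finset.sum_congr rfl fun n _ => by ring
  rw [Finset.sum_congr rfl key, Finset.sum_comm]
  have inner : ∀ n ∈ range (N + 1),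
      ∑ m ∈ range (N + 1), (a (n + 1) : ℤ) * (coeff m w * coeff (N - m) (w ^ n)) =
      (a (n + 1) : ℤ) * coeff N (w ^ (n + 1)) := by
    intro n _
    rw [← Finset.mul_sum, pow_succ', PowerSeries.coeff_mul,
      Finset.Nat.sum_antidiagonal_eq_sum_range_succ_mk]
  rw [Finset.sum_congr rfl inner, Finset.sum_range_succ' (fun n => (a n : ℤ) * coeff N (w ^ n)),
    Finset.sum_range_succ (fun n => (a (n + 1) : ℤ) * coeff N (w ^ (n + 1)))]
  rw [coeff_w_pow_eq_zero (Nat.lt_succ_self N)]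
  rw [pow_zero, PowerSeries.coeff_one, PowerSeries.coeff_C]
  rcases Nat.eq_zero_or_pos N with rfl | hN
  · simp
  · simp [Nat.pos_iff_ne_zero.mp hN]
  

/-- common denominator -/
noncomputable def Dq : PowerSeries ℤ := (1 - X) * (1 + X) ^ (h + 2) * (1 - X ^ (h + t + 3))

/-- numerator of the generating function ending at height `j` -/
noncomputable def Mp (j : ℤ) : PowerSeries ℤ :=
  if 0 ≤ j then
    X ^ j.toNat * (1 - X ^ (t + 2)) * (1 - X ^ (h - j.toNat + 2)) * q * (1 + X) ^ (h - j.toNat)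
  else q * X * (1 - X ^ (h + 1)) * (1 - X ^ (t + 1 - (-j).toNat)) * (1 + X) ^ ((-j).toNat + h)

/-- numerator of the tail sum `∑_{k ≥ j}` of the generating functions -/
noncomputable def Gp (j : ℤ) : PowerSeries ℤ :=
  if 0 ≤ j then q * (1 - X ^ (t + 2)) * (X ^ j.toNat - X ^ (h + 1)) * (1 + X) ^ (h + 1 - j.toNat)
  else q * (1 - X ^ (h + 1)) * (1 - X ^ (t + 2 - (-j).toNat)) * (1 + X) ^ (h + 1 + (-j).toNat)

lemma Gp_top : Gp t h ((h : ℤ) + 1) = 0 := by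
  have : ((h : ℤ) + 1) = ((h + 1 : ℕ) : ℤ) := by push_cast; ring
  rw [Gp, this, if_pos (by omega), Int.toNat_natCast]
  simp

lemma Gp_step (j : ℤ) (h1 : -(t:ℤ) ≤ j) (h2 : j ≤ (h:ℤ)) :
    Gp t h j = Mp t h j + Gp t h (j + 1) := by
  rcases le_or_gt 0 j with hj0 | hj0
  · -- j = a ≥ 0, h = a + d
    lift j to ℕ using hj0 with a
    obtain ⟨d, rfl⟩ : ∃ d, h = a + d := ⟨h - a, by omega⟩
    have e1 : ((a:ℤ) + 1) = ((a + 1 : ℕ) : ℤ) := by push_cast; ring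
    rw [Gp, Gp, Mp, e1, if_pos (by omega), if_pos (by omega), if_pos (by omega),
      Int.toNat_natCast, Int.toNat_natCast]
    rw [show a + d + 1 - a = d + 1 by omega, show a + d - a = d by omega,
      show a + d + 1 - (a + 1) = d by omega]
    ring
  · -- j = -(s+1)
    obtain ⟨s, rfl⟩ : ∃ s : ℕ, j = -((s:ℤ) + 1) := ⟨(-j - 1).toNat, by omega⟩
    have hst : (s:ℤ) + 1 ≤ t := by omega
    obtain ⟨e, hte⟩ : ∃ e, t = s + 1 + e := ⟨t - (s + 1), by omega⟩
    have e1 : -((s:ℤ) + 1) = -((s + 1 : ℕ) : ℤ) := by push_cast; ring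
    have e2 : (-(-((s + 1 : ℕ) : ℤ))).toNat = s + 1 := by simp
    rcases Nat.eq_zero_or_pos s with rfl | hs
    · -- crossing zero : j = -1
      rw [Gp, Mp, e1, if_neg (by omega), if_neg (by omega), e2,
        show -(((0 + 1 : ℕ)) : ℤ) + 1 = ((0 : ℕ) : ℤ) by omega, Gp,
        if_pos (by omega), Int.toNat_natCast]
      subst hte
      rw [show 0 + 1 + e + 2 - (0 + 1) = e + 2 by omega,
        show 0 + 1 + e + 1 - (0 + 1) = e + 1 by omega, pow_zero, Nat.sub_zero]
      ring
    · obtain ⟨s', rfl⟩ : ∃ s', s = s' + 1 := ⟨s - 1, by omega⟩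
      have e3 : -(((s' + 1 + 1 : ℕ)):ℤ) + 1 = -(((s' + 1 : ℕ)) : ℤ) := by omega
      rw [Gp, Mp, e1, if_neg (by omega), if_neg (by omega), e2, e3, Gp, if_neg (by omega)]
      rw [show (-(-((s' + 1 : ℕ) : ℤ))).toNat = s' + 1 by omega]
      subst hte
      rw [show s' + 1 + 1 + e + 2 - (s' + 1 + 1) = e + 2 by omega,
        show s' + 1 + 1 + e + 1 - (s' + 1 + 1) = e + 1 by omega,
        show s' + 1 + 1 + e + 2 - (s' + 1) = e + 3 by omega]
      ring

lemma Gp_sum : ∀ (n : ℕ) (m : ℤ), -(t:ℤ) ≤ m → m ≤ (h:ℤ) + 1 → ((h:ℤ) + 1 - m).toNat = n →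
    ∑ k ∈ Finset.Icc m (h:ℤ), Mp t h k = Gp t h m := by
  intro n
  induction n with
  | zero =>
      intro m h1 h2 h3
      have : m = (h:ℤ) + 1 := by omega
      subst this
      rw [Finset.Icc_eq_empty (by omega), Finset.sum_empty, Gp_top]
  | succ n IH =>
      intro m h1 h2 h3
      have hmh : m ≤ (h:ℤ) := by omega
      have hsplit : Finset.Icc m (h:ℤ) = insert m (Finset.Icc (m+1) (h:ℤ)) := by
        ext x; simp only [Finset.mem_Icc, Finset.mem_insert]; omega
      rw [hsplit, Finset.sum_insert (by simp only [Finset.mem_Icc]; omega),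
        IH (m+1) (by omega) (by omega) (by omega)]
      exact (Gp_step t h m h1 hmh).symm

lemma dagger (j : ℤ) (h1 : -(t:ℤ) ≤ j) (h2 : j ≤ (h:ℤ)) :
    q * Mp t h j = (if j = 0 then q * Dq t h else 0) +
      X * ((if -(t:ℤ) ≤ j - 1 then Mp t h (j - 1) else 0) + Gp t h (j + 1)) := by
  rcases lt_trichotomy j 0 with hneg | rfl | hpos
  · -- j = -(s+1)
    obtain ⟨s, rfl⟩ : ∃ s : ℕ, j = -((s:ℤ) + 1) := ⟨(-j - 1).toNat, by omega⟩
    obtain ⟨e, hte⟩ : ∃ e, t = s + 1 + e := ⟨t - (s + 1), by omega⟩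
    have hMj : Mp t h (-((s:ℤ) + 1)) =
        q * X * (1 - X ^ (h + 1)) * (1 - X ^ (e + 1)) * (1 + X) ^ (s + 1 + h) := by
      rw [show -((s:ℤ) + 1) = -((s + 1 : ℕ) : ℤ) by omega, Mp, if_neg (by omega),
        show (-(-((s + 1 : ℕ) : ℤ))).toNat = s + 1 by omega,
        show t + 1 - (s + 1) = e + 1 by omega]
    have hGj1 : Gp t h (-((s:ℤ) + 1) + 1) =
        q * (1 - X ^ (h + 1)) * (1 - X ^ (e + 3)) * (1 + X) ^ (h + 1 + s) := by
      rcases Nat.eq_zero_or_pos s with rfl | hs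
      · rw [show -(((0:ℕ):ℤ) + 1) + 1 = ((0 : ℕ) : ℤ) by omega, Gp, if_pos (by omega),
          Int.toNat_natCast, show t + 2 = e + 3 by omega, Nat.sub_zero, pow_zero]
        ring
      · obtain ⟨s', rfl⟩ : ∃ s', s = s' + 1 := ⟨s - 1, by omega⟩
        rw [show -(((s' + 1 : ℕ):ℤ) + 1) + 1 = -((s' + 1 : ℕ) : ℤ) by omega, Gp,
          if_neg (by omega), show (-(-((s' + 1 : ℕ) : ℤ))).toNat = s' + 1 by omega,
          show t + 2 - (s' + 1) = e + 3 by omega]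
    rw [if_neg (by omega), hMj, hGj1]
    rcases Nat.eq_zero_or_pos e with rfl | he
    · -- guard false : j = -t
      rw [if_neg (by omega)]
      rw [q]; ring
    · -- guard true
      obtain ⟨e', rfl⟩ : ∃ e', e = e' + 1 := ⟨e - 1, by omega⟩
      have hMj1 : Mp t h (-((s:ℤ) + 1) - 1) =
          q * X * (1 - X ^ (h + 1)) * (1 - X ^ (e' + 1)) * (1 + X) ^ (s + 2 + h) := by
        rw [show -((s:ℤ) + 1) - 1 = -((s + 2 : ℕ) : ℤ) by omega, Mp, if_neg (by omega),
          show (-(-((s + 2 : ℕ) : ℤ))).toNat = s + 2 by omega,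
          show t + 1 - (s + 2) = e' + 1 by omega]
      rw [if_pos (by omega), hMj1]
      rw [q]; ring
  · -- j = 0
    rw [if_pos rfl]
    have hM0 : Mp t h 0 = (1 - X ^ (t + 2)) * (1 - X ^ (h + 2)) * q * (1 + X) ^ h := by
      rw [Mp, if_pos le_rfl, Int.toNat_zero, Nat.sub_zero, pow_zero, one_mul]
    have hG1 : Gp t h ((0:ℤ) + 1) = q * (1 - X ^ (t + 2)) * (X - X ^ (h + 1)) * (1 + X) ^ h := by
      rw [show (0:ℤ) + 1 = ((1 : ℕ) : ℤ) by omega, Gp, if_pos (by omega), Int.toNat_natCast,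
        show h + 1 - 1 = h by omega, pow_one]
    rw [hM0, hG1, Dq]
    rcases Nat.eq_zero_or_pos t with rfl | ht
    · rw [if_neg (by omega)]
      rw [q]; ring
    · obtain ⟨e, rfl⟩ : ∃ e, t = e + 1 := ⟨t - 1, by omega⟩
      have hMm1 : Mp (e + 1) h ((0:ℤ) - 1) =
          q * X * (1 - X ^ (h + 1)) * (1 - X ^ (e + 1)) * (1 + X) ^ (1 + h) := by
        rw [show (0:ℤ) - 1 = -((1 : ℕ) : ℤ) by omega, Mp, if_neg (by omega),
          show (-(-((1 : ℕ) : ℤ))).toNat = 1 by omega, show e + 1 + 1 - 1 = e + 1 by omega]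
      rw [if_pos (by omega), hMm1]
      rw [q]; ring
  · -- j = a + 1 ≥ 1
    obtain ⟨a, rfl⟩ : ∃ a : ℕ, j = ((a:ℤ) + 1) := ⟨(j - 1).toNat, by omega⟩
    obtain ⟨d, hd⟩ : ∃ d, h = a + 1 + d := ⟨h - (a + 1), by omega⟩
    have hMj : Mp t h ((a:ℤ) + 1) =
        X ^ (a + 1) * (1 - X ^ (t + 2)) * (1 - X ^ (d + 2)) * q * (1 + X) ^ d := by
      rw [show ((a:ℤ) + 1) = ((a + 1 : ℕ) : ℤ) by omega, Mp, if_pos (by omega),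
        Int.toNat_natCast, show h - (a + 1) = d by omega]
    have hMa : Mp t h (((a:ℤ) + 1) - 1) =
        X ^ a * (1 - X ^ (t + 2)) * (1 - X ^ (d + 3)) * q * (1 + X) ^ (d + 1) := by
      rw [show ((a:ℤ) + 1) - 1 = ((a : ℕ) : ℤ) by omega, Mp, if_pos (by omega),
        Int.toNat_natCast, show h - a = d + 1 by omega, show d + 1 + 2 = d + 3 by omega]
    have hGa2 : Gp t h (((a:ℤ) + 1) + 1) =
        q * (1 - X ^ (t + 2)) * (X ^ (a + 2) - X ^ (h + 1)) * (1 + X) ^ d := by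
      rw [show ((a:ℤ) + 1) + 1 = ((a + 2 : ℕ) : ℤ) by omega, Gp, if_pos (by omega),
        Int.toNat_natCast, show h + 1 - (a + 2) = d by omega]
    rw [if_neg (by omega), if_pos (by omega), hMj, hMa, hGa2, hd]
    rw [q]; ring

noncomputable def Sser (t h : ℕ) (j : ℤ) : PowerSeries ℤ :=
  series fun n => pathCount n 0 j (Pb t h)

lemma series_zero_fun : series (fun _ => 0) = 0 := by
  ext N; simp [coeff_series]

lemma S_eq (t h : ℕ) (j : ℤ) (h1 : -(t:ℤ) ≤ j) (h2 : j ≤ (h:ℤ)) :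
    Sser t h j = (if j = 0 then 1 else 0) +
      w * ((if -(t:ℤ) ≤ j - 1 then Sser t h (j - 1) else 0) +
        ∑ k ∈ Finset.Icc (j + 1) (h:ℤ), Sser t h k) := by
  rw [Sser, series_rec]
  congr 1
  · rw [pathCount_zero]
    split_ifs <;> simp
  congr 1
  have hfun : (fun n => pathCount (n + 1) 0 j (Pb t h)) =
      (fun n => (if -(t:ℤ) ≤ j - 1 then pathCount n 0 (j - 1) (Pb t h) else 0) +
        ∑ k ∈ Finset.Icc (j + 1) (h:ℤ), pathCount n 0 k (Pb t h)) :=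
    funext fun n => pathCount_succ t h n j h1 h2
  rw [hfun, series_add]
  congr 1
  · split_ifs with hg
    · rfl
    · exact series_zero_fun
  · exact series_sum _ _

lemma q_ne_zero : q ≠ 0 := by
  intro hq
  have := congrArg (constantCoeff) hq
  rw [constantCoeff_q] at this
  simp at this

lemma M_eq (t h : ℕ) (j : ℤ) (h1 : -(t:ℤ) ≤ j) (h2 : j ≤ (h:ℤ)) :
    Mp t h j = (if j = 0 then 1 else 0) * Dq t h +
      w * ((if -(t:ℤ) ≤ j - 1 then Mp t h (j - 1) else 0) +
        ∑ k ∈ Finset.Icc (j + 1) (h:ℤ), Mp t h k) := by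
  apply mul_left_cancel₀ q_ne_zero
  rw [dagger t h j h1 h2,
    Gp_sum t h ((h:ℤ) + 1 - (j + 1)).toNat (j + 1) (by omega) (by omega) rfl]
  rw [← q_mul_w]
  split_ifs <;> ring

lemma key (t h : ℕ) (j : ℤ) (h1 : -(t:ℤ) ≤ j) (h2 : j ≤ (h:ℤ)) :
    Sser t h j * Dq t h = Mp t h j := by
  have hU : ∀ j, -(t:ℤ) ≤ j → j ≤ (h:ℤ) →
      Sser t h j * Dq t h - Mp t h j =
      w * ((if -(t:ℤ) ≤ j - 1 then Sser t h (j - 1) * Dq t h - Mp t h (j - 1) else 0) +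
        ∑ k ∈ Finset.Icc (j + 1) (h:ℤ), (Sser t h k * Dq t h - Mp t h k)) := by
    intro j hj1 hj2
    rw [S_eq t h j hj1 hj2, M_eq t h j hj1 hj2, Finset.sum_sub_distrib, ← Finset.sum_mul]
    split_ifs <;> ring
  have hcoeff : ∀ N : ℕ, ∀ j, -(t:ℤ) ≤ j → j ≤ (h:ℤ) →
      coeff N (Sser t h j * Dq t h - Mp t h j) = 0 := by
    intro N
    induction N using Nat.strong_induction_on with
    | _ N IH =>
      intro j hj1 hj2
      rw [hU j hj1 hj2, PowerSeries.coeff_mul]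
      apply Finset.sum_eq_zero
      rintro ⟨m1, m2⟩ hm
      rw [Finset.HasAntidiagonal.mem_antidiagonal] at hm
      rcases Nat.eq_zero_or_pos m1 with rfl | hm1
      · have hw0 : coeff 0 w = 0 := by
          rw [w, coeff_zero_eq_constantCoeff, map_mul]
          simp
        simp [hw0]
      · have hm2 : m2 < N := by omega
        have hz : coeff m2
            ((if -(t:ℤ) ≤ j - 1 then Sser t h (j - 1) * Dq t h - Mp t h (j - 1) else 0) +
              ∑ k ∈ Finset.Icc (j + 1) (h:ℤ), (Sser t h k * Dq t h - Mp t h k)) = 0 := by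
          rw [map_add]
          have hA : coeff m2
              (if -(t:ℤ) ≤ j - 1 then Sser t h (j - 1) * Dq t h - Mp t h (j - 1) else 0) = 0 := by
            split_ifs with hg
            · exact IH m2 hm2 (j - 1) hg (by omega)
            · simp
          have hB : coeff m2
              (∑ k ∈ Finset.Icc (j + 1) (h:ℤ), (Sser t h k * Dq t h - Mp t h k)) = 0 := by
            rw [map_sum]
            apply Finset.sum_eq_zero
            intro k hk
            rw [Finset.mem_Icc] at hk
            exact IH m2 hm2 k (by omega) hk.2
          rw [hA, hB, add_zero]
        rw [hz, mul_zero]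
  have : Sser t h j * Dq t h - Mp t h j = 0 := by
    ext N
    rw [map_zero]
    exact hcoeff N j h1 h2
  linear_combination this

theorem stmt3 (t h i : ℕ) (hih : i ≤ h) :
    (series fun n => pathCount n 0 i (fun x => -(t : ℤ) ≤ x ∧ x ≤ (h : ℤ))) *
        (1 - X) * (1 + X) ^ (i + 2) * (1 - X ^ (h + t + 3)) =
      X ^ i * (1 - X ^ (t + 2)) * (1 - X ^ (h - i + 2)) * q := by
  obtain ⟨d, rfl⟩ : ∃ d, h = i + d := ⟨h - i, by omega⟩
  have hkey := key t (i + d) (i : ℤ) (by omega) (by omega)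
  have hMp : Mp t (i + d) (i : ℤ) =
      X ^ i * (1 - X ^ (t + 2)) * (1 - X ^ (d + 2)) * q * (1 + X) ^ d := by
    rw [Mp, if_pos (by omega), Int.toNat_natCast, show i + d - i = d by omega]
  have hu : ((1 + X : PowerSeries ℤ)) ^ d ≠ 0 := by
    apply pow_ne_zero
    intro hh
    have := congrArg (coeff 1) hh
    simp at this
  apply mul_right_cancel₀ hu
  have hS : (series fun n => pathCount n 0 i (fun x => -(t : ℤ) ≤ x ∧ x ≤ ((i + d : ℕ) : ℤ))) =
      Sser t (i + d) (i : ℤ) := rfl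
  rw [hS, show i + d - i = d by omega]
  calc Sser t (i + d) (i:ℤ) * (1 - X) * (1 + X) ^ (i + 2) * (1 - X ^ (i + d + t + 3)) *
        (1 + X) ^ d
      = Sser t (i + d) (i:ℤ) * Dq t (i + d) := by rw [Dq]; ring
    _ = Mp t (i + d) (i : ℤ) := hkey
    _ = X ^ i * (1 - X ^ (t + 2)) * (1 - X ^ (d + 2)) * q * (1 + X) ^ d := hMp
    _ = X ^ i * (1 - X ^ (t + 2)) * (1 - X ^ (d + 2)) * q * (1 + X) ^ d := by ring
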